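/- Let L⁽⁰⁾ ∈ ℝ^{N×N} be the Laplacian of a connected undirected weighted graph (symmetric, nonpositive off-diagonal entries, L⁽⁰⁾·1_N = 0, with 0 a simple eigenvalue), and let γ₁, γ₂ ∈ ℝ satisfy γ₂ > γ₁ > 0 and γ₁ − 2γ₂ > −4/μ for every nonzero eigenvalue μ of L⁽⁰⁾. Then there exists δ_A > 0 with the following property: for every sequence of symmetric matrices L⁽ᵏ⁾ (k = 0, 1, 2, …) such that each L⁽ᵏ⁾ is the Laplacian of an undirected weighted graph with the same edge set as L⁽⁰⁾, each L⁽ᵏ⁾ is diagonalized by a common orthonormal eigenbasis of L⁽⁰⁾ (i.e. all L⁽ᵏ⁾ commute with L⁽⁰⁾ and with each other), and the corresponding adjacency matrices satisfy ‖A⁽ᵏ⁾ − A⁽⁰⁾‖_max < δ_A for all k ≥ 0, every solution of the time-varying system x^{(k+1)} = F⁽ᵏ⁾ x^{(k)}, F⁽ᵏ⁾ = [[I_N, I_N], [−γ₁L⁽ᵏ⁾, I_N − γ₂L⁽ᵏ⁾]], reaches consensus: p_i^{(k)} − p_j^{(k)} → 0 and v_i^{(k)} − v_j^{(k)} → 0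 for all i, j. -/

import Mathlib

open Filter Matrix

open Complex
open scoped NNReal ENNReal

attribute [local instance] Matrix.linftyOpNormedRing Matrix.linftyOpNormedAlgebra

set_option maxHeartbeats 1000000

noncomputable section ConsensusAux



lemma quad_real_root_lt_one (a b u : ℝ) (hu : u ^ 2 - a * u + b = 0)
    (h1 : 0 < 1 - a + b) (h2 : 0 < 1 + a + b) (hb : b < 1) : u ^ 2 < 1 := by
  have hb' : b = a * u - u ^ 2 := by linarith
  rcases lt_trichotomy u 1 with h | h | h
  · rcases lt_trichotomy (-1) u with h' | h' | h'
    · nlinarith [sq_nonneg u]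
    · exfalso; nlinarith
    · exfalso
      have hA : 0 < (1 + u) * (1 - u + a) := by nlinarith
      have hA2 : 1 - u + a < 0 := by nlinarith
      nlinarith
  · exfalso; nlinarith
  · exfalso
    have hA : 0 < (1 - u) * (1 + u - a) := by nlinarith
    have hA2 : 1 + u - a < 0 := by nlinarith
    nlinarith

lemma root_abs_lt_one (g1 g2 m : ℝ) (hg1 : 0 < g1) (h12 : g1 < g2) (hm : 0 < m)
    (hj : 0 < 4 + m * (g1 - 2 * g2)) (lam : ℂ)
    (hroot : lam ^ 2 - ((2 : ℂ) - (g2 * m : ℝ)) * lam + ((1 : ℂ) - (g2 * m : ℝ) + (g1 * m : ℝ)) = 0) :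
    ‖lam‖ < 1 := by
  have hb1 : 1 - g2 * m + g1 * m < 1 := by nlinarith
  have hre : lam.re ^ 2 - lam.im ^ 2 - (2 - g2 * m) * lam.re + (1 - g2 * m + g1 * m) = 0 := by
    have := congrArg Complex.re hroot
    simp [pow_two, Complex.add_re, Complex.sub_re, Complex.mul_re,
      Complex.ofReal_re, Complex.ofReal_im] at this
    nlinarith [this]
  have him : (2 * lam.re - (2 - g2 * m)) * lam.im = 0 := by
    have := congrArg Complex.im hroot
    simp [pow_two, Complex.add_im, Complex.sub_im, Complex.mul_im,
      Complex.ofReal_re, Complex.ofReal_im] at this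
    nlinarith [this]
  have key : lam.re ^ 2 + lam.im ^ 2 < 1 := by
    rcases mul_eq_zero.mp him with h | hv
    · have : lam.re ^ 2 + lam.im ^ 2 = 1 - g2 * m + g1 * m := by nlinarith
      linarith
    · have h1 : 0 < 1 - (2 - g2 * m) + (1 - g2 * m + g1 * m) := by nlinarith
      have h2 : 0 < 1 + (2 - g2 * m) + (1 - g2 * m + g1 * m) := by nlinarith
      have := quad_real_root_lt_one (2 - g2 * m) (1 - g2 * m + g1 * m) lam.re
        (by nlinarith) h1 h2 hb1
      nlinarith [sq_nonneg lam.im, this]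
  calc ‖lam‖ = Real.sqrt (lam.re ^ 2 + lam.im ^ 2) := by
        rw [Complex.norm_def, Complex.normSq_apply]; ring_nf
    _ < 1 := by
        rw [show (1:ℝ) = Real.sqrt 1 by simp]
        exact Real.sqrt_lt_sqrt (by positivity) key

def Jmat (N : ℕ) : Matrix (Fin N) (Fin N) ℝ := Matrix.of (fun _ _ => (1 : ℝ))

/-- projector onto mean-zero vectors -/
def Pmat (N : ℕ) : Matrix (Fin N) (Fin N) ℝ := 1 - (N : ℝ)⁻¹ • Jmat N

lemma Pmat_mul_left {N : ℕ} {M : Matrix (Fin N) (Fin N) ℝ} (hsym : M.IsSymm)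
    (hrow : M.mulVec (fun _ => (1 : ℝ)) = 0) : Pmat N * M = M := by
  have hJ : Jmat N * M = 0 := by
    ext i j
    have hr := congrFun hrow j
    simp only [Matrix.mulVec, dotProduct, mul_one, Pi.zero_apply] at hr
    simp only [Jmat, Matrix.mul_apply, Matrix.of_apply, one_mul, Matrix.zero_apply]
    calc ∑ k, M k j = ∑ k, M j k := by
          refine Finset.sum_congr rfl fun k _ => ?_
          have := congrFun (congrFun hsym k) j
          simpa [Matrix.transpose_apply] using this.symm
      _ = 0 := hr
  rw [Pmat, Matrix.sub_mul, Matrix.one_mul, Matrix.smul_mul, hJ, smul_zero, sub_zero]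

lemma Pmat_mul_right {N : ℕ} {M : Matrix (Fin N) (Fin N) ℝ}
    (hrow : M.mulVec (fun _ => (1 : ℝ)) = 0) : M * Pmat N = M := by
  have hJ : M * Jmat N = 0 := by
    ext i j
    have hr := congrFun hrow i
    simp only [Matrix.mulVec, dotProduct, mul_one, Pi.zero_apply] at hr
    simpa [Jmat, Matrix.mul_apply] using hr
  rw [Pmat, Matrix.mul_sub, Matrix.mul_one, Matrix.mul_smul, hJ, smul_zero, sub_zero]

lemma Nat_cast_ne {N : ℕ} (hN : 1 ≤ N) : (N : ℝ) ≠ 0 :=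
  (Nat.cast_pos.mpr (by omega)).ne'

lemma Pmat_mul_J {N : ℕ} (hN : 1 ≤ N) : Pmat N * Jmat N = 0 := by
  have hJJ : Jmat N * Jmat N = (N : ℝ) • Jmat N := by
    ext i j; simp [Jmat, Matrix.mul_apply]
  rw [Pmat, Matrix.sub_mul, Matrix.one_mul, Matrix.smul_mul, hJJ, smul_smul,
    inv_mul_cancel₀ (Nat_cast_ne hN), one_smul, sub_self]

lemma Pmat_idem {N : ℕ} (hN : 1 ≤ N) : Pmat N * Pmat N = Pmat N := by
  conv_lhs => rw [show Pmat N * Pmat N = Pmat N * (1 - (N:ℝ)⁻¹ • Jmat N) from rfl]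
  rw [Matrix.mul_sub, Matrix.mul_one, Matrix.mul_smul, Pmat_mul_J hN, smul_zero, sub_zero]

lemma Pmat_mulVec_ones {N : ℕ} (hN : 1 ≤ N) :
    (Pmat N).mulVec (fun _ => (1 : ℝ)) = 0 := by
  ext i
  simp only [Pmat, Jmat, Matrix.mulVec, dotProduct, Matrix.sub_apply, Matrix.one_apply,
    Matrix.smul_apply, Matrix.of_apply, smul_eq_mul, mul_one, Pi.zero_apply,
    Finset.sum_sub_distrib, Finset.sum_ite_eq, Finset.mem_univ, if_pos, Finset.sum_const,
    Finset.card_univ, Fintype.card_fin, nsmul_eq_mul]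
  rw [mul_inv_cancel₀ (Nat_cast_ne hN)]; ring

lemma Pmat_mulVec_diff {N : ℕ} (p : Fin N → ℝ) (i j : Fin N) :
    (Pmat N).mulVec p i - (Pmat N).mulVec p j = p i - p j := by
  simp only [Pmat, Jmat, Matrix.mulVec, dotProduct, Matrix.sub_apply, Matrix.one_apply,
    Matrix.smul_apply, Matrix.of_apply, smul_eq_mul, one_mul, sub_mul, ite_mul, zero_mul,
    Finset.sum_sub_distrib, Finset.sum_ite_eq, Finset.mem_univ, if_pos]
  ring


lemma ones_ne_zero (hN : 1 ≤ N) : (fun _ => (1 : ℝ) : Fin N → ℝ) ≠ 0 := by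
  intro h
  have := congrFun h ⟨0, by omega⟩
  simp at this

lemma ker_trivial (hN : 1 ≤ N) (L0 : Matrix (Fin N) (Fin N) ℝ)
    (hrow0 : L0.mulVec (fun _ => (1 : ℝ)) = 0)
    (hsimple : Module.finrank ℝ (LinearMap.ker (Matrix.toLin' L0)) = 1) :
    ∀ w : Fin N → ℝ, L0.mulVec w = 0 → (Pmat N).mulVec w = w → w = 0 := by
  intro w hw hPw
  have hones : (fun _ => (1:ℝ) : Fin N → ℝ) ∈ LinearMap.ker (Matrix.toLin' L0) := by
    simp [LinearMap.mem_ker, Matrix.toLin'_apply, hrow0]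
  have hspan : Submodule.span ℝ {(fun _ => (1:ℝ) : Fin N → ℝ)} ≤ LinearMap.ker (Matrix.toLin' L0) := by
    rw [Submodule.span_le, Set.singleton_subset_iff]; exact hones
  have hfr : Module.finrank ℝ (Submodule.span ℝ {(fun _ => (1:ℝ) : Fin N → ℝ)}) = 1 :=
    finrank_span_singleton (ones_ne_zero hN)
  have heq : Submodule.span ℝ {(fun _ => (1:ℝ) : Fin N → ℝ)} = LinearMap.ker (Matrix.toLin' L0) :=
    Submodule.eq_of_le_of_finrank_le hspan (by rw [hfr, hsimple])
  have hwker : w ∈ LinearMap.ker (Matrix.toLin' L0) := by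
    simp [LinearMap.mem_ker, Matrix.toLin'_apply, hw]
  rw [← heq, Submodule.mem_span_singleton] at hwker
  obtain ⟨c, rfl⟩ := hwker
  rw [Matrix.mulVec_smul, Pmat_mulVec_ones hN, smul_zero] at hPw
  exact hPw.symm


def Gmat (N : ℕ) (γ₁ γ₂ : ℝ) (L : Matrix (Fin N) (Fin N) ℝ) :
    Matrix (Fin N ⊕ Fin N) (Fin N ⊕ Fin N) ℝ :=
  fromBlocks (Pmat N) (Pmat N) (-(γ₁ • L)) (Pmat N - γ₂ • L)
def PPmat (N : ℕ) : Matrix (Fin N ⊕ Fin N) (Fin N ⊕ Fin N) ℝ :=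
  fromBlocks (Pmat N) 0 0 (Pmat N)






lemma PP_mul_G (hN : 1 ≤ N) {γ₁ γ₂ : ℝ} {L : Matrix (Fin N) (Fin N) ℝ} (hsym : L.IsSymm)
    (hrow : L.mulVec (fun _ => (1 : ℝ)) = 0) :
    PPmat N * Gmat N γ₁ γ₂ L = Gmat N γ₁ γ₂ L := by
  have hPL : Pmat N * L = L := Pmat_mul_left hsym hrow
  rw [PPmat, Gmat, Matrix.fromBlocks_multiply]
  simp only [Matrix.zero_mul, Matrix.mul_zero, add_zero, zero_add, Matrix.mul_neg,
    Matrix.mul_smul, Matrix.mul_sub, hPL, Pmat_idem hN, smul_zero, neg_zero, sub_zero,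
    Matrix.mul_one, Matrix.one_mul]

lemma G_mul_PP (hN : 1 ≤ N) {γ₁ γ₂ : ℝ} {L : Matrix (Fin N) (Fin N) ℝ}
    (hrow : L.mulVec (fun _ => (1 : ℝ)) = 0) :
    Gmat N γ₁ γ₂ L * PPmat N = Gmat N γ₁ γ₂ L := by
  have hLP : L * Pmat N = L := Pmat_mul_right hrow
  rw [Gmat, PPmat, Matrix.fromBlocks_multiply]
  simp only [Matrix.zero_mul, Matrix.mul_zero, add_zero, zero_add, Matrix.neg_mul,
    Matrix.smul_mul, Matrix.sub_mul, hLP, Pmat_idem hN, smul_zero, neg_zero, sub_zero,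
    Matrix.mul_one, Matrix.one_mul]

lemma dot_symm (A : Matrix (Fin N) (Fin N) ℝ) (hsym : A.IsSymm) (u v : Fin N → ℝ) :
    u ⬝ᵥ (A *ᵥ v) = v ⬝ᵥ (A *ᵥ u) := by
  simp only [dotProduct, Matrix.mulVec, Finset.mul_sum]
  rw [Finset.sum_comm]
  exact Finset.sum_congr rfl fun i _ => Finset.sum_congr rfl fun j _ => by
    rw [hsym.apply j i]; ring

lemma re_mulVec (A : Matrix (Fin N) (Fin N) ℝ) (p : Fin N → ℂ) (i : Fin N) :
    ((A.map Complex.ofReal *ᵥ p) i).re = (A *ᵥ (fun j => (p j).re)) i := by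
  simp [Matrix.mulVec, dotProduct, Complex.re_sum, Complex.mul_re]

lemma im_mulVec (A : Matrix (Fin N) (Fin N) ℝ) (p : Fin N → ℂ) (i : Fin N) :
    ((A.map Complex.ofReal *ᵥ p) i).im = (A *ᵥ (fun j => (p j).im)) i := by
  simp [Matrix.mulVec, dotProduct, Complex.im_sum, Complex.mul_im]

theorem spec_lt_one (hN : 1 ≤ N) (L0 : Matrix (Fin N) (Fin N) ℝ)
    (hsym0 : L0.IsSymm) (hrow0 : L0.mulVec (fun _ => (1 : ℝ)) = 0) (hpsd0 : L0.PosSemidef)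
    (hsimple : Module.finrank ℝ (LinearMap.ker (Matrix.toLin' L0)) = 1)
    (γ₁ γ₂ : ℝ) (hγ₁ : 0 < γ₁) (hγ₁₂ : γ₁ < γ₂)
    (hμ : ∀ μ : ℝ, μ ∈ spectrum ℝ L0 → μ ≠ 0 → γ₁ - 2 * γ₂ > -4 / μ) :
    ∀ lam ∈ spectrum ℂ ((Gmat N γ₁ γ₂ L0).map Complex.ofReal), ‖lam‖ < 1 := by
  intro lam hlam
  set Gc : Matrix (Fin N ⊕ Fin N) (Fin N ⊕ Fin N) ℂ := (Gmat N γ₁ γ₂ L0).map Complex.ofReal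
    with hGcdef
  -- extract eigenvector
  rw [spectrum.mem_iff] at hlam
  have hdet : (algebraMap ℂ (Matrix (Fin N ⊕ Fin N) (Fin N ⊕ Fin N) ℂ) lam - Gc).det = 0 := by
    by_contra h
    exact hlam ((Matrix.isUnit_iff_isUnit_det _).mpr (isUnit_iff_ne_zero.mpr h))
  obtain ⟨z, hz0, hzeq⟩ := Matrix.exists_mulVec_eq_zero_iff.mpr hdet
  have hGz : Gc *ᵥ z = lam • z := by
    have hexp : (algebraMap ℂ (Matrix (Fin N ⊕ Fin N) (Fin N ⊕ Fin N) ℂ) lam - Gc) *ᵥ z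
        = lam • z - Gc *ᵥ z := by
      rw [Matrix.sub_mulVec]
      congr 1
      rw [Algebra.algebraMap_eq_smul_one, Matrix.smul_mulVec, Matrix.one_mulVec]
    rw [hexp] at hzeq
    exact (sub_eq_zero.mp hzeq).symm
  rcases eq_or_ne lam 0 with rfl | hlam0
  · simp
  -- complex pieces
  set Lc : Matrix (Fin N) (Fin N) ℂ := L0.map Complex.ofReal with hLcdef
  set Pc : Matrix (Fin N) (Fin N) ℂ := (Pmat N).map Complex.ofReal with hPcdef
  have hGcblocks : Gc = fromBlocks Pc Pc (-((γ₁:ℂ) • Lc)) (Pc - (γ₂:ℂ) • Lc) := by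
    have e1 : (-(γ₁ • L0)).map Complex.ofReal = -((γ₁:ℂ) • Lc) := by
      ext i j
      simp [hLcdef, Matrix.map_apply, Matrix.neg_apply, Matrix.smul_apply]
    have e2 : (Pmat N - γ₂ • L0).map Complex.ofReal = Pc - (γ₂:ℂ) • Lc := by
      ext i j
      simp [hLcdef, hPcdef, Matrix.map_apply, Matrix.sub_apply, Matrix.smul_apply]
    rw [hGcdef, Gmat, Matrix.fromBlocks_map, e1, e2]
  have hPPcblocks : (PPmat N).map Complex.ofReal = fromBlocks Pc 0 0 Pc := by
    rw [PPmat, Matrix.fromBlocks_map]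
    congr 1 <;> ext i j <;> simp [Matrix.map_apply]
  -- z is fixed by the projector
  have hmapmul : ∀ (A B : Matrix (Fin N ⊕ Fin N) (Fin N ⊕ Fin N) ℝ),
      (A * B).map Complex.ofReal = A.map Complex.ofReal * B.map Complex.ofReal := by
    intro A B
    exact Matrix.map_mul (L := A) (M := B) (f := Complex.ofRealHom)
  have hPPG : ((PPmat N).map Complex.ofReal) * Gc = Gc := by
    rw [hGcdef, ← hmapmul]
    exact congrArg (fun M => M.map Complex.ofReal) (PP_mul_G hN (γ₁ := γ₁) (γ₂ := γ₂) hsym0 hrow0)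
  have hPz : ((PPmat N).map Complex.ofReal) *ᵥ z = z := by
    have h1 : ((PPmat N).map Complex.ofReal) *ᵥ (Gc *ᵥ z) = Gc *ᵥ z := by
      rw [Matrix.mulVec_mulVec, hPPG]
    rw [hGz, Matrix.mulVec_smul] at h1
    exact smul_right_injective (Fin N ⊕ Fin N → ℂ) hlam0 h1
  -- components
  set p : Fin N → ℂ := fun i => z (Sum.inl i) with hpdef
  set q : Fin N → ℂ := fun i => z (Sum.inr i) with hqdef
  have hzelim : z = Sum.elim p q := by funext s; cases s <;> rfl
  have hPp : Pc *ᵥ p = p := by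
    funext i
    have := congrFun hPz (Sum.inl i)
    rw [hzelim, hPPcblocks, Matrix.fromBlocks_mulVec] at this
    simpa using this
  have hPq : Pc *ᵥ q = q := by
    funext i
    have := congrFun hPz (Sum.inr i)
    rw [hzelim, hPPcblocks, Matrix.fromBlocks_mulVec] at this
    simpa using this
  have heq1 : p + q = lam • p := by
    funext i
    have := congrFun hGz (Sum.inl i)
    rw [hzelim, hGcblocks, Matrix.fromBlocks_mulVec] at this
    simpa [hPp, hPq] using this
  have heq2 : -((γ₁:ℂ) • (Lc *ᵥ p)) + (q - (γ₂:ℂ) • (Lc *ᵥ q)) = lam • q := by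
    funext i
    have := congrFun hGz (Sum.inr i)
    rw [hzelim, hGcblocks, Matrix.fromBlocks_mulVec] at this
    simpa [Matrix.neg_mulVec, Matrix.sub_mulVec, Matrix.smul_mulVec, hPq] using this
  have hp0 : p ≠ 0 := by
    intro hp
    apply hz0
    have hq0 : q = 0 := by
      funext i
      have := congrFun heq1 i
      simp [hp] at this
      simpa using this
    rw [hzelim, hp, hq0]; simp
  have hq : q = (lam - 1) • p := by
    funext i
    have := congrFun heq1 i
    simp only [Pi.add_apply, Pi.smul_apply, smul_eq_mul] at this
    simp only [Pi.smul_apply, smul_eq_mul]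
    linear_combination this
  have hkey : ((γ₁:ℂ) + (γ₂:ℂ) * (lam - 1)) • (Lc *ᵥ p) = (-(lam - 1)^2) • p := by
    have hLq : Lc *ᵥ q = (lam - 1) • (Lc *ᵥ p) := by rw [hq, Matrix.mulVec_smul]
    funext i
    have h2 := congrFun heq2 i
    have hqi := congrFun hq i
    rw [hLq] at h2
    simp only [Pi.add_apply, Pi.sub_apply, Pi.neg_apply, Pi.smul_apply, smul_eq_mul] at h2 hqi ⊢
    linear_combination -h2 + (1 - lam) * hqi
  have hc0 : (γ₁:ℂ) + (γ₂:ℂ) * (lam - 1) ≠ 0 := by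
    intro hc
    obtain ⟨i, hi⟩ := Function.ne_iff.mp hp0
    have hpi : p i ≠ 0 := by simpa using hi
    have h0 := congrFun hkey i
    rw [hc] at h0
    simp only [Pi.smul_apply, smul_eq_mul, zero_smul, Pi.zero_apply, zero_mul] at h0
    have h2 : (lam - 1) ^ 2 * p i = 0 := by linear_combination h0
    have hl1 : lam = 1 := by
      rcases mul_eq_zero.mp h2 with h | h
      · have := pow_eq_zero_iff (two_ne_zero) |>.mp h
        have := sub_eq_zero.mp this
        exact this
      · exact absurd h hpi
    rw [hl1] at hc
    simp only [sub_self, mul_zero, add_zero, Complex.ofReal_eq_zero] at hc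
    exact hγ₁.ne' hc
  have hcmul : ((γ₁:ℂ) + (γ₂:ℂ) * (lam - 1)) *
      ((-(lam - 1)^2) / ((γ₁:ℂ) + (γ₂:ℂ) * (lam - 1))) = -(lam - 1)^2 :=
    mul_div_cancel₀ _ hc0
  have hLp : Lc *ᵥ p = ((-(lam - 1)^2) / ((γ₁:ℂ) + (γ₂:ℂ) * (lam - 1))) • p := by
    refine smul_right_injective (Fin N → ℂ) hc0 ?_
    show ((γ₁:ℂ) + (γ₂:ℂ) * (lam - 1)) • (Lc *ᵥ p)
      = ((γ₁:ℂ) + (γ₂:ℂ) * (lam - 1)) • (((-(lam - 1)^2) / ((γ₁:ℂ) + (γ₂:ℂ) * (lam - 1))) • p)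
    rw [hkey, smul_smul, hcmul]
  set μ : ℂ := (-(lam - 1)^2) / ((γ₁:ℂ) + (γ₂:ℂ) * (lam - 1)) with hμdef
  -- real and imaginary parts
  set pr : Fin N → ℝ := fun i => (p i).re with hprdef
  set pim : Fin N → ℝ := fun i => (p i).im with himdef
  have hLpr : L0 *ᵥ pr = fun i => μ.re * pr i - μ.im * pim i := by
    funext i
    have h := re_mulVec L0 p i
    rw [← hLcdef, hLp] at h
    rw [← h]
    simp [Complex.mul_re, hprdef, himdef]
  have hLpim : L0 *ᵥ pim = fun i => μ.im * pr i + μ.re * pim i := by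
    funext i
    have h := im_mulVec L0 p i
    rw [← hLcdef, hLp] at h
    rw [← h]
    simp only [Pi.smul_apply, smul_eq_mul, Complex.mul_im, hprdef, himdef]
    ring
  have hs1 : pr ⬝ᵥ (L0 *ᵥ pim) = μ.im * (pr ⬝ᵥ pr) + μ.re * (pr ⬝ᵥ pim) := by
    rw [hLpim]
    simp only [dotProduct, Finset.mul_sum, ← Finset.sum_add_distrib]
    exact Finset.sum_congr rfl fun i _ => by ring
  have hs2 : pim ⬝ᵥ (L0 *ᵥ pr) = μ.re * (pr ⬝ᵥ pim) - μ.im * (pim ⬝ᵥ pim) := by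
    rw [hLpr]
    simp only [dotProduct, Finset.mul_sum]
    rw [← Finset.sum_sub_distrib]
    exact Finset.sum_congr rfl fun i _ => by ring
  have hpair := dot_symm L0 hsym0 pr pim
  have hSpos : 0 < pr ⬝ᵥ pr + pim ⬝ᵥ pim := by
    have h1 : 0 ≤ pr ⬝ᵥ pr := Finset.sum_nonneg fun i _ => mul_self_nonneg _
    have h2 : 0 ≤ pim ⬝ᵥ pim := Finset.sum_nonneg fun i _ => mul_self_nonneg _
    rcases eq_or_lt_of_le h1 with he1 | hl1
    · rcases eq_or_lt_of_le h2 with he2 | hl2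
      · exfalso
        apply hp0
        have hpr0 : pr = 0 := dotProduct_self_eq_zero.mp he1.symm
        have hpim0 : pim = 0 := dotProduct_self_eq_zero.mp he2.symm
        funext i
        have e1 := congrFun hpr0 i
        have e2 := congrFun hpim0 i
        simp only [hprdef, himdef, Pi.zero_apply] at e1 e2
        exact Complex.ext e1 e2
      · linarith
    · linarith
  have hμim : μ.im = 0 := by
    have hz : μ.im * (pr ⬝ᵥ pr + pim ⬝ᵥ pim) = 0 := by
      rw [hs1, hs2] at hpair
      linarith [hpair]
    exact (mul_eq_zero.mp hz).resolve_right hSpos.ne'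
  set m : ℝ := μ.re with hmdef
  have hμm : μ = (m : ℂ) := Complex.ext rfl (by simp [hμim])
  have hLprm : L0 *ᵥ pr = m • pr := by
    rw [hLpr]; funext i; simp [hμim, hmdef]
  have hLpimm : L0 *ᵥ pim = m • pim := by
    rw [hLpim]; funext i; simp [hμim, hmdef]
  -- projector fixes pr and pim
  have hPpr : (Pmat N) *ᵥ pr = pr := by
    funext i
    have h := re_mulVec (Pmat N) p i
    rw [← hPcdef, hPp] at h
    rw [← h]
  have hPpim : (Pmat N) *ᵥ pim = pim := by
    funext i
    have h := im_mulVec (Pmat N) p i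
    rw [← hPcdef, hPp] at h
    rw [← h]
  -- pick a nonzero real eigenvector
  obtain ⟨w, hw0, hww, hPw⟩ : ∃ w : Fin N → ℝ, w ≠ 0 ∧ L0 *ᵥ w = m • w ∧ (Pmat N) *ᵥ w = w := by
    rcases eq_or_ne pr 0 with hpr | hpr
    · refine ⟨pim, ?_, hLpimm, hPpim⟩
      intro hpim
      apply hp0
      funext i
      exact Complex.ext (by simpa using congrFun hpr i) (by simpa using congrFun hpim i)
    · exact ⟨pr, hpr, hLprm, hPpr⟩
  -- m is a nonzero eigenvalue of L0
  have hmspec : m ∈ spectrum ℝ L0 := by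
    rw [spectrum.mem_iff]
    intro hunit
    rw [Matrix.isUnit_iff_isUnit_det, isUnit_iff_ne_zero] at hunit
    apply hunit
    rw [← Matrix.exists_mulVec_eq_zero_iff]
    refine ⟨w, hw0, ?_⟩
    rw [Matrix.sub_mulVec, Algebra.algebraMap_eq_smul_one, Matrix.smul_mulVec,
      Matrix.one_mulVec, hww, sub_self]
  have hwwpos : 0 < w ⬝ᵥ w := by
    rcases eq_or_lt_of_le (Finset.sum_nonneg fun i (_ : i ∈ Finset.univ) => mul_self_nonneg (w i)) with he | hl
    · exact absurd (dotProduct_self_eq_zero.mp he.symm) hw0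
    · exact hl
  have hm0 : 0 ≤ m := by
    have hq1 := hpsd0.dotProduct_mulVec_nonneg w
    rw [hww] at hq1
    have hst : star w = w := by funext i; simp
    rw [hst] at hq1
    have : w ⬝ᵥ (m • w) = m * (w ⬝ᵥ w) := by
      simp [dotProduct, Finset.mul_sum]
      exact Finset.sum_congr rfl fun i _ => by ring
    rw [this] at hq1
    nlinarith [hwwpos]
  have hmne : m ≠ 0 := by
    intro hm
    apply hw0
    refine ker_trivial hN L0 hrow0 hsimple w ?_ hPw
    rw [hww, hm, zero_smul]
  have hmpos : 0 < m := lt_of_le_of_ne hm0 (Ne.symm hmne)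
  have hj : 0 < 4 + m * (γ₁ - 2 * γ₂) := by
    have := hμ m hmspec hmne
    rw [gt_iff_lt, div_lt_iff₀ hmpos] at this
    nlinarith [this]
  have hcm : ((γ₁:ℂ) + (γ₂:ℂ) * (lam - 1)) * (m : ℂ) = -(lam - 1)^2 := by
    rw [← hμm, hcmul]
  have hroot : lam ^ 2 - ((2 : ℂ) - ((γ₂ * m : ℝ) : ℂ)) * lam
      + ((1 : ℂ) - ((γ₂ * m : ℝ) : ℂ) + ((γ₁ * m : ℝ) : ℂ)) = 0 := by
    push_cast
    linear_combination hcm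
  exact root_abs_lt_one γ₁ γ₂ m hγ₁ hγ₁₂ hmpos hj lam hroot


lemma pow_norm_tendsto_zero {n : Type*} [Fintype n] [DecidableEq n] [Nonempty n]
    (A : Matrix n n ℂ) (h : ∀ lam ∈ spectrum ℂ A, ‖lam‖ < 1) :
    Filter.Tendsto (fun k : ℕ => ‖A ^ k‖) atTop (nhds 0) := by
  letI : CompleteSpace (Matrix n n ℂ) := FiniteDimensional.complete ℂ _
  have hfin : (spectrum ℂ A).Finite := A.finite_spectrum
  set r : ℝ≥0 := hfin.toFinset.sup (fun z => ‖z‖₊) with hrdef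
  have hr : r < 1 := by
    rw [hrdef]
    refine Finset.sup_lt_iff (by norm_num : (⊥ : ℝ≥0) < 1) |>.mpr fun z hz => ?_
    have := h z (hfin.mem_toFinset.mp hz)
    rw [← NNReal.coe_lt_coe]
    simpa using this
  have hsr : spectralRadius ℂ A ≤ (r : ENNReal) := by
    refine iSup₂_le fun z hz => ?_
    exact_mod_cast ENNReal.coe_le_coe.mpr (Finset.le_sup (hfin.mem_toFinset.mpr hz))
  set r' : ℝ≥0 := (r + 1) / 2 with hr'def
  have hrr' : r < r' := by
    rw [hr'def]
    rw [lt_div_iff₀ (by norm_num)]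
    calc r * 2 = r + r := by ring
      _ < r + 1 := by exact add_lt_add_right hr r
  have hr'1 : r' < 1 := by
    rw [hr'def, div_lt_iff₀ (by norm_num)]
    calc r + 1 < 1 + 1 := add_lt_add_left hr 1
      _ = 1 * 2 := by norm_num
  have htends := spectrum.pow_nnnorm_pow_one_div_tendsto_nhds_spectralRadius A
  have hev : ∀ᶠ k : ℕ in atTop, (‖A ^ k‖₊ : ENNReal) ^ (1/(k:ℝ)) < (r' : ENNReal) :=
    htends.eventually_lt_const (lt_of_le_of_lt hsr (by exact_mod_cast hrr'))
  have hb : ∀ᶠ k in atTop, ‖A ^ k‖ ≤ ((r' : ℝ)) ^ k := by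
    filter_upwards [hev, eventually_gt_atTop 0] with k hk hk0
    have hkne : (k : ℝ) ≠ 0 := Nat.cast_ne_zero.mpr hk0.ne'
    have hEq : ((‖A ^ k‖₊ : ENNReal) ^ (1/(k:ℝ))) ^ (k : ℕ) = (‖A ^ k‖₊ : ENNReal) := by
      rw [← ENNReal.rpow_natCast _ k, ← ENNReal.rpow_mul, one_div, inv_mul_cancel₀ hkne,
        ENNReal.rpow_one]
    have hle : (‖A ^ k‖₊ : ENNReal) ≤ (r' : ENNReal) ^ (k : ℕ) := by
      rw [← hEq]
      exact pow_le_pow_left₀ zero_le hk.le k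
    rw [← ENNReal.coe_pow, ENNReal.coe_le_coe] at hle
    calc ‖A ^ k‖ = ((‖A ^ k‖₊ : ℝ≥0) : ℝ) := rfl
      _ ≤ ((r' ^ k : ℝ≥0) : ℝ) := NNReal.coe_le_coe.mpr hle
      _ = ((r' : ℝ)) ^ k := by push_cast; ring
  refine squeeze_zero' (Filter.Eventually.of_forall fun k => norm_nonneg _) hb ?_
  exact tendsto_pow_atTop_nhds_zero_of_lt_one r'.coe_nonneg (by exact_mod_cast hr'1)

lemma norm_map_ofReal {m : Type*} [Fintype m] [DecidableEq m]
    (A : Matrix m m ℝ) : ‖A.map Complex.ofReal‖ = ‖A‖ := by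
  rw [Matrix.linfty_opNorm_def, Matrix.linfty_opNorm_def]
  refine congrArg _ (Finset.sup_congr rfl fun i _ => ?_)
  refine Finset.sum_congr rfl fun j _ => ?_
  simp [Matrix.map_apply]

lemma linfty_norm_le_rows {m : Type*} [Fintype m] [DecidableEq m]
    (A : Matrix m m ℝ) {c : ℝ} (hc : 0 ≤ c) (h : ∀ i, ∑ j, |A i j| ≤ c) : ‖A‖ ≤ c := by
  rw [Matrix.linfty_opNorm_def]
  have key : (Finset.univ.sup fun i => ∑ j, ‖A i j‖₊) ≤ (⟨c, hc⟩ : ℝ≥0) := by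
    refine Finset.sup_le fun i _ => ?_
    refine NNReal.coe_le_coe.mp ?_
    push_cast
    simp only [Real.norm_eq_abs]
    exact h i
  exact_mod_cast key


lemma PP_mul_F {N : ℕ} (hN : 1 ≤ N) {γ₁ γ₂ : ℝ} {L : Matrix (Fin N) (Fin N) ℝ}
    (hsym : L.IsSymm) (hrow : L.mulVec (fun _ => (1 : ℝ)) = 0) :
    PPmat N * (fromBlocks 1 1 (-(γ₁ • L)) (1 - γ₂ • L)) = Gmat N γ₁ γ₂ L := by
  have hPL : Pmat N * L = L := Pmat_mul_left hsym hrow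
  rw [PPmat, Matrix.fromBlocks_multiply, Gmat]
  simp only [Matrix.zero_mul, Matrix.mul_zero, add_zero, zero_add, Matrix.mul_neg,
    Matrix.mul_smul, Matrix.mul_sub, hPL, smul_zero, neg_zero, sub_zero,
    Matrix.mul_one, Matrix.one_mul]

/-- consensus of second-order agents under time-varying weights:
if the nominal Laplacian L⁽⁰⁾ is that of a connected undirected graph and the
gains satisfy the consensus conditions, there is an admissible variation range
δ_A > 0 such that every time-varying Laplacian sequence with the same edge set,
a common eigenbasis (pairwise commuting), and adjacency matrices within δ_A (in
the entrywise max norm) of the nominal one yields consensus. -/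
theorem stmt_5 (N : ℕ) (hN : 1 ≤ N) (L0 : Matrix (Fin N) (Fin N) ℝ)
    (hsym0 : L0.IsSymm)
    (hoff0 : ∀ i j : Fin N, i ≠ j → L0 i j ≤ 0)
    (hrow0 : L0.mulVec (fun _ => (1 : ℝ)) = 0)
    (hpsd0 : L0.PosSemidef)
    (hsimple : Module.finrank ℝ (LinearMap.ker (Matrix.toLin' L0)) = 1)
    (γ₁ γ₂ : ℝ) (hγ₁ : 0 < γ₁) (hγ₁₂ : γ₁ < γ₂)
    (hμ : ∀ μ : ℝ, μ ∈ spectrum ℝ L0 → μ ≠ 0 → γ₁ - 2 * γ₂ > -4 / μ) :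
    ∃ δA > (0 : ℝ), ∀ L : ℕ → Matrix (Fin N) (Fin N) ℝ,
      L 0 = L0 →
      (∀ k, (L k).IsSymm) →
      (∀ k, ∀ i j : Fin N, i ≠ j → L k i j ≤ 0) →
      (∀ k, (L k).mulVec (fun _ => (1 : ℝ)) = 0) →
      -- same edge set as the nominal graph
      (∀ k, ∀ i j : Fin N, i ≠ j → (L k i j ≠ 0 ↔ L0 i j ≠ 0)) →
      -- common orthonormal eigenbasis: all the Laplacians commute
      (∀ k l, L k * L l = L l * L k) →
      -- entrywise max-norm bound on the adjacency matrices
      (∀ k, ∀ i j : Fin N,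
        |(if i = j then (0 : ℝ) else -(L k i j)) -
          (if i = j then (0 : ℝ) else -(L0 i j))| < δA) →
      ∀ x : ℕ → (Fin N ⊕ Fin N → ℝ),
        (∀ k, x (k + 1)
            = (Matrix.fromBlocks 1 1 (-(γ₁ • L k)) (1 - γ₂ • L k)).mulVec (x k)) →
        ∀ i j : Fin N,
          Tendsto (fun k => x k (Sum.inl i) - x k (Sum.inl j)) atTop (nhds 0)
          ∧ Tendsto (fun k => x k (Sum.inr i) - x k (Sum.inr j)) atTop (nhds 0) := by
  classical
  have hNpos : 0 < N := hN
  set G0 : Matrix (Fin N ⊕ Fin N) (Fin N ⊕ Fin N) ℝ := Gmat N γ₁ γ₂ L0 with hG0def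
  have hrad := spec_lt_one hN L0 hsym0 hrow0 hpsd0 hsimple γ₁ γ₂ hγ₁ hγ₁₂ hμ
  have hNE : Nonempty (Fin N ⊕ Fin N) := ⟨Sum.inl ⟨0, hNpos⟩⟩
  have htend0 := pow_norm_tendsto_zero (G0.map Complex.ofReal) hrad
  have hmap_pow : ∀ t : ℕ, (G0 ^ t).map Complex.ofReal = (G0.map Complex.ofReal) ^ t := by
    intro t
    have := map_pow (Complex.ofRealHom.mapMatrix (m := Fin N ⊕ Fin N)) G0 t
    simp only [RingHom.mapMatrix_apply] at this
    exact this
  have htendreal : Tendsto (fun t : ℕ => ‖G0 ^ t‖) atTop (nhds 0) := by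
    refine Filter.Tendsto.congr (fun t => ?_) htend0
    rw [← hmap_pow, norm_map_ofReal]
  obtain ⟨n₀, hquarter, hn₀pos⟩ := ((htendreal.eventually_lt_const
    (by norm_num : (0:ℝ) < 1/4)).and (eventually_gt_atTop 0)).exists
  set B : ℝ := ‖G0‖ with hBdef
  have hB0 : 0 ≤ B := norm_nonneg _
  have hcont : Tendsto (fun e : ℝ => (B + e) ^ n₀) (nhds 0) (nhds (B ^ n₀)) := by
    have hco : Continuous fun e : ℝ => (B + e) ^ n₀ := by continuity
    simpa using hco.tendsto 0
  have hev := hcont.eventually_lt_const (by linarith : B ^ n₀ < B ^ n₀ + 1/4)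
  obtain ⟨ε, hε, hball⟩ := Metric.eventually_nhds_iff.mp hev
  set η : ℝ := ε / 2 with hηdef
  have hη0 : 0 < η := by rw [hηdef]; linarith
  have hηlt : (B + η) ^ n₀ < B ^ n₀ + 1/4 := by
    apply hball
    rw [Real.dist_eq, hηdef, sub_zero, abs_of_pos (by linarith : (0:ℝ) < ε / 2)]
    linarith
  have hγsum : 0 < γ₁ + γ₂ := by linarith
  set D : ℝ := 2 * N * (γ₁ + γ₂) with hDdef
  have hD0 : 0 ≤ D := by positivity
  set δA : ℝ := η / (D + 1) with hδdef
  have hδ0 : 0 < δA := by positivity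
  refine ⟨δA, hδ0, ?_⟩
  intro L hL0 hsym hoff hrow hedge hcomm hclose x hx i j
  set G : ℕ → Matrix (Fin N ⊕ Fin N) (Fin N ⊕ Fin N) ℝ := fun k => Gmat N γ₁ γ₂ (L k)
    with hGdef
  -- row sums of the Laplacian differences
  have hrowzero : ∀ k i, ∑ a, (L k i a - L0 i a) = 0 := by
    intro k i
    have h1 := congrFun (hrow k) i
    have h2 := congrFun hrow0 i
    simp only [Matrix.mulVec, dotProduct, mul_one, Pi.zero_apply] at h1 h2
    rw [Finset.sum_sub_distrib, h1, h2, sub_zero]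
  have hrowsum : ∀ k i, (∑ a, |L k i a - L0 i a|) ≤ 2 * N * δA := by
    intro k i
    have hoffd : ∀ a, a ≠ i → |L k i a - L0 i a| ≤ δA := by
      intro a ha
      have := hclose k i a
      rw [if_neg (Ne.symm ha), if_neg (Ne.symm ha)] at this
      calc |L k i a - L0 i a| = |(-(L k i a)) - (-(L0 i a))| := by
            rw [show (-(L k i a)) - (-(L0 i a)) = -(L k i a - L0 i a) by ring, abs_neg]
        _ ≤ δA := this.le
    have hdiag : |L k i i - L0 i i| ≤ ∑ a ∈ Finset.univ.erase i, |L k i a - L0 i a| := by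
      have hsum := hrowzero k i
      rw [← Finset.add_sum_erase Finset.univ _ (Finset.mem_univ i)] at hsum
      have : L k i i - L0 i i = -(∑ a ∈ Finset.univ.erase i, (L k i a - L0 i a)) := by
        linarith
      rw [this, abs_neg]
      exact Finset.abs_sum_le_sum_abs _ _
    have herase : ∑ a ∈ Finset.univ.erase i, |L k i a - L0 i a| ≤ N * δA := by
      calc ∑ a ∈ Finset.univ.erase i, |L k i a - L0 i a|
          ≤ ∑ _a ∈ Finset.univ.erase i, δA :=
            Finset.sum_le_sum fun a ha => hoffd a (Finset.ne_of_mem_erase ha)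
        _ = (Finset.univ.erase i).card * δA := by rw [Finset.sum_const, nsmul_eq_mul]
        _ ≤ N * δA := by
            have : ((Finset.univ.erase i).card : ℝ) ≤ N := by
              have := Finset.card_erase_le (s := (Finset.univ : Finset (Fin N))) (a := i)
              have hcard : (Finset.univ : Finset (Fin N)).card = N := by simp
              exact_mod_cast le_trans this (le_of_eq hcard)
            exact mul_le_mul_of_nonneg_right this hδ0.le
    calc ∑ a, |L k i a - L0 i a|
        = |L k i i - L0 i i| + ∑ a ∈ Finset.univ.erase i, |L k i a - L0 i a| :=
          (Finset.add_sum_erase Finset.univ _ (Finset.mem_univ i)).symm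
      _ ≤ N * δA + N * δA := add_le_add (le_trans hdiag herase) herase
      _ = 2 * N * δA := by ring
  -- closeness of the G matrices
  have hGclose : ∀ k, ‖G k - G0‖ ≤ η := by
    intro k
    have hc0 : (0:ℝ) ≤ (γ₁ + γ₂) * (2 * N * δA) := by positivity
    have hb : ‖G k - G0‖ ≤ (γ₁ + γ₂) * (2 * N * δA) := by
      refine linfty_norm_le_rows _ hc0 ?_
      intro s
      rcases s with i | i
      · have hz : ∀ t, (G k - G0) (Sum.inl i) t = 0 := by
          intro t
          rcases t with a | a <;>
            simp [hGdef, hG0def, Gmat, Matrix.sub_apply]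
        simp only [hz, abs_zero]
        rw [Finset.sum_const, smul_zero]
        exact hc0
      · have e1 : ∀ a, |(G k - G0) (Sum.inr i) (Sum.inl a)| = γ₁ * |L k i a - L0 i a| := by
          intro a
          have : (G k - G0) (Sum.inr i) (Sum.inl a) = γ₁ * (L0 i a - L k i a) := by
            simp [hGdef, hG0def, Gmat, Matrix.sub_apply]
            ring
          rw [this, abs_mul, abs_of_pos hγ₁, abs_sub_comm]
        have e2 : ∀ a, |(G k - G0) (Sum.inr i) (Sum.inr a)| = γ₂ * |L k i a - L0 i a| := by
          intro a
          have : (G k - G0) (Sum.inr i) (Sum.inr a) = γ₂ * (L0 i a - L k i a) := by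
            simp [hGdef, hG0def, Gmat, Matrix.sub_apply]
            ring
          rw [this, abs_mul, abs_of_pos (by linarith : (0:ℝ) < γ₂), abs_sub_comm]
        rw [Fintype.sum_sum_type]
        simp only [e1, e2]
        rw [← Finset.mul_sum, ← Finset.mul_sum]
        calc γ₁ * ∑ a, |L k i a - L0 i a| + γ₂ * ∑ a, |L k i a - L0 i a|
            = (γ₁ + γ₂) * ∑ a, |L k i a - L0 i a| := by ring
          _ ≤ (γ₁ + γ₂) * (2 * N * δA) :=
              mul_le_mul_of_nonneg_left (hrowsum k i) hγsum.le
    refine le_trans hb ?_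
    have hδDle : (γ₁ + γ₂) * (2 * N * δA) = D * δA := by rw [hDdef]; ring
    rw [hδDle, hδdef]
    rw [div_eq_inv_mul]
    have hD1 : (0:ℝ) < D + 1 := by linarith
    rw [show D * ((D+1)⁻¹ * η) = (D / (D+1)) * η by field_simp]
    have : D / (D + 1) ≤ 1 := by
      rw [div_le_one hD1]; linarith
    nlinarith [hη0]
  -- the dynamics of the projected state
  set y : ℕ → (Fin N ⊕ Fin N → ℝ) := fun k => (PPmat N).mulVec (x k) with hydef
  have hy : ∀ k, y (k+1) = (G k).mulVec (y k) := by
    intro k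
    calc y (k+1) = (PPmat N) *ᵥ ((fromBlocks 1 1 (-(γ₁ • L k)) (1 - γ₂ • L k)) *ᵥ x k) := by
          rw [hydef]; simp only; rw [hx k]
      _ = ((PPmat N) * (fromBlocks 1 1 (-(γ₁ • L k)) (1 - γ₂ • L k))) *ᵥ x k :=
          Matrix.mulVec_mulVec _ _ _
      _ = (G k) *ᵥ x k := by rw [PP_mul_F hN (hsym k) (hrow k)]
      _ = ((G k) * PPmat N) *ᵥ x k := by rw [G_mul_PP hN (hrow k)]
      _ = (G k) *ᵥ y k := by rw [← Matrix.mulVec_mulVec, hydef]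
  -- products of the time-varying matrices
  set W : ℕ → ℕ → Matrix (Fin N ⊕ Fin N) (Fin N ⊕ Fin N) ℝ :=
    fun k t => Nat.rec (1 : Matrix (Fin N ⊕ Fin N) (Fin N ⊕ Fin N) ℝ)
      (fun s acc => G (k+s) * acc) t with hWdef
  have hW0 : ∀ k, W k 0 = 1 := fun k => rfl
  have hWs : ∀ k t, W k (t+1) = G (k+t) * W k t := fun k t => rfl
  have hyW : ∀ k t, y (k+t) = (W k t) *ᵥ (y k) := by
    intro k t
    induction t with
    | zero => rw [Nat.add_zero, hW0, Matrix.one_mulVec]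
    | succ t ih =>
        rw [show k + (t+1) = (k+t)+1 by omega, hy (k+t), ih, hWs, ← Matrix.mulVec_mulVec]
  have hnorm1 : ‖(1 : Matrix (Fin N ⊕ Fin N) (Fin N ⊕ Fin N) ℝ)‖ = 1 := norm_one
  have hWbound : ∀ k t, ‖W k t‖ ≤ (B+η)^t ∧ ‖W k t - G0^t‖ ≤ (B+η)^t - B^t := by
    intro k t
    induction t with
    | zero =>
        constructor
        · rw [hW0, hnorm1, pow_zero]
        · simp [hW0]
    | succ t ih =>
        obtain ⟨ih1, ih2⟩ := ih
        have hGb : ‖G (k+t)‖ ≤ B + η := by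
          have hdec : G (k+t) = G0 + (G (k+t) - G0) := by abel
          calc ‖G (k+t)‖ = ‖G0 + (G (k+t) - G0)‖ := by rw [← hdec]
            _ ≤ ‖G0‖ + ‖G (k+t) - G0‖ := norm_add_le _ _
            _ ≤ B + η := add_le_add le_rfl (hGclose (k+t))
        have hBη0 : (0:ℝ) ≤ B + η := by linarith
        constructor
        · rw [hWs]
          calc ‖G (k+t) * W k t‖ ≤ ‖G (k+t)‖ * ‖W k t‖ := norm_mul_le _ _
            _ ≤ (B+η) * (B+η)^t := mul_le_mul hGb ih1 (norm_nonneg _) hBη0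
            _ = (B+η)^(t+1) := (pow_succ' _ _).symm
        · have hdecomp : W k (t+1) - G0^(t+1)
              = (G (k+t) - G0) * W k t + G0 * (W k t - G0^t) := by
            rw [hWs, pow_succ']
            noncomm_ring
          have hb1 : ‖(G (k+t) - G0) * W k t‖ ≤ η * (B+η)^t := by
            calc ‖(G (k+t) - G0) * W k t‖ ≤ ‖G (k+t) - G0‖ * ‖W k t‖ := norm_mul_le _ _
              _ ≤ η * (B+η)^t := mul_le_mul (hGclose (k+t)) ih1 (norm_nonneg _) hη0.le
          have hb2 : ‖G0 * (W k t - G0^t)‖ ≤ B * ((B+η)^t - B^t) := by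
            calc ‖G0 * (W k t - G0^t)‖ ≤ ‖G0‖ * ‖W k t - G0^t‖ := norm_mul_le _ _
              _ ≤ B * ((B+η)^t - B^t) := mul_le_mul le_rfl ih2 (norm_nonneg _) hB0
          calc ‖W k (t+1) - G0^(t+1)‖
              = ‖(G (k+t) - G0) * W k t + G0 * (W k t - G0^t)‖ := by rw [hdecomp]
            _ ≤ ‖(G (k+t) - G0) * W k t‖ + ‖G0 * (W k t - G0^t)‖ := norm_add_le _ _
            _ ≤ η * (B+η)^t + B * ((B+η)^t - B^t) := add_le_add hb1 hb2
            _ = (B+η)^(t+1) - B^(t+1) := by ring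
  have hW12 : ∀ k, ‖W k n₀‖ ≤ 1/2 := by
    intro k
    have h1 := (hWbound k n₀).2
    calc ‖W k n₀‖ = ‖(W k n₀ - G0^n₀) + G0^n₀‖ := by rw [sub_add_cancel]
      _ ≤ ‖W k n₀ - G0^n₀‖ + ‖G0^n₀‖ := norm_add_le _ _
      _ ≤ ((B+η)^n₀ - B^n₀) + ‖G0^n₀‖ := add_le_add_left h1 _
      _ ≤ 1/4 + 1/4 := add_le_add (by linarith) hquarter.le
      _ = 1/2 := by norm_num
  have hiter : ∀ q : ℕ, ‖y (q * n₀)‖ ≤ (1/2)^q * ‖y 0‖ := by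
    intro q
    induction q with
    | zero => simp
    | succ q ih =>
        rw [Nat.succ_mul, hyW (q*n₀) n₀]
        calc ‖(W (q*n₀) n₀) *ᵥ y (q*n₀)‖ ≤ ‖W (q*n₀) n₀‖ * ‖y (q*n₀)‖ :=
              Matrix.linfty_opNorm_mulVec _ _
          _ ≤ (1/2) * ((1/2)^q * ‖y 0‖) :=
              mul_le_mul (hW12 _) ih (norm_nonneg _) (by norm_num)
          _ = (1/2)^(q+1) * ‖y 0‖ := by ring
  set C₀ : ℝ := (B + η + 1)^n₀ with hC₀def
  have hyk : ∀ k, ‖y k‖ ≤ C₀ * ((1/2)^(k / n₀) * ‖y 0‖) := by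
    intro k
    have heq : (k / n₀) * n₀ + k % n₀ = k := by
      rw [Nat.mul_comm]; exact Nat.div_add_mod k n₀
    have hYW := hyW ((k / n₀) * n₀) (k % n₀)
    rw [heq] at hYW
    have hWc : ‖W ((k / n₀) * n₀) (k % n₀)‖ ≤ C₀ := by
      calc ‖W ((k / n₀) * n₀) (k % n₀)‖ ≤ (B+η)^(k % n₀) := (hWbound _ _).1
        _ ≤ (B+η+1)^(k % n₀) := pow_le_pow_left₀ (by linarith) (by linarith) _
        _ ≤ (B+η+1)^n₀ := pow_le_pow_right₀ (by linarith) (Nat.mod_lt _ hn₀pos).le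
    calc ‖y k‖ = ‖(W ((k / n₀) * n₀) (k % n₀)) *ᵥ y ((k / n₀) * n₀)‖ := by rw [hYW]
      _ ≤ ‖W ((k / n₀) * n₀) (k % n₀)‖ * ‖y ((k / n₀) * n₀)‖ :=
          Matrix.linfty_opNorm_mulVec _ _
      _ ≤ C₀ * ((1/2)^(k / n₀) * ‖y 0‖) :=
          mul_le_mul hWc (hiter _) (norm_nonneg _)
            (le_trans (norm_nonneg (W ((k / n₀) * n₀) (k % n₀))) hWc)
  have hdiv : Tendsto (fun k : ℕ => k / n₀) atTop atTop :=
    Filter.tendsto_atTop_atTop.mpr fun b =>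
      ⟨b * n₀, fun a ha => (Nat.le_div_iff_mul_le hn₀pos).mpr ha⟩
  have hgeo : Tendsto (fun k : ℕ => C₀ * ((1/2:ℝ)^(k / n₀) * ‖y 0‖)) atTop (nhds 0) := by
    have h1 : Tendsto (fun q : ℕ => ((1:ℝ)/2)^q) atTop (nhds 0) :=
      tendsto_pow_atTop_nhds_zero_of_lt_one (by norm_num) (by norm_num)
    have h2 := (h1.comp hdiv).mul_const ‖y 0‖
    rw [zero_mul] at h2
    have h3 := h2.const_mul C₀
    rw [mul_zero] at h3
    exact h3
  have hgeo2 : Tendsto (fun k : ℕ => 2 * (C₀ * ((1/2:ℝ)^(k / n₀) * ‖y 0‖))) atTop (nhds 0) := by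
    have := hgeo.const_mul (2:ℝ)
    rwa [mul_zero] at this
  -- relating coordinates
  have hyinl : ∀ k a, y k (Sum.inl a) = ((Pmat N) *ᵥ (fun b => x k (Sum.inl b))) a := by
    intro k a
    simp [hydef, PPmat, Matrix.mulVec, dotProduct, Fintype.sum_sum_type]
  have hyinr : ∀ k a, y k (Sum.inr a) = ((Pmat N) *ᵥ (fun b => x k (Sum.inr b))) a := by
    intro k a
    simp [hydef, PPmat, Matrix.mulVec, dotProduct, Fintype.sum_sum_type]
  have hbound : ∀ (s s' : Fin N ⊕ Fin N) k,
      |y k s - y k s'| ≤ 2 * (C₀ * ((1/2:ℝ)^(k / n₀) * ‖y 0‖)) := by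
    intro s s' k
    have h1 : |y k s| ≤ ‖y k‖ := by
      have := norm_le_pi_norm (y k) s
      simpa [Real.norm_eq_abs] using this
    have h2 : |y k s'| ≤ ‖y k‖ := by
      have := norm_le_pi_norm (y k) s'
      simpa [Real.norm_eq_abs] using this
    calc |y k s - y k s'| ≤ |y k s| + |y k s'| := abs_sub _ _
      _ ≤ 2 * ‖y k‖ := by linarith
      _ ≤ 2 * (C₀ * ((1/2:ℝ)^(k / n₀) * ‖y 0‖)) := by linarith [hyk k]
  constructor
  · refine squeeze_zero_norm (fun k => ?_) hgeo2
    have hxy : x k (Sum.inl i) - x k (Sum.inl j) = y k (Sum.inl i) - y k (Sum.inl j) := by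
      rw [hyinl k i, hyinl k j, Pmat_mulVec_diff]
    rw [Real.norm_eq_abs, hxy]
    exact hbound _ _ k
  · refine squeeze_zero_norm (fun k => ?_) hgeo2
    have hxy : x k (Sum.inr i) - x k (Sum.inr j) = y k (Sum.inr i) - y k (Sum.inr j) := by
      rw [hyinr k i, hyinr k j, Pmat_mulVec_diff]
    rw [Real.norm_eq_abs, hxy]
    exact hbound _ _ k
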